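/- Let C be a nonempty closed convex subset of a real Hilbert space H, let β > 0, let φ : ℝ → ℝ be even, convex, and differentiable with a β-Lipschitzian derivative, and set h = φ ∘ d_C. Then for every x ∈ H, the gradient of h at x equals (φ'(d_C(x))/d_C(x)) (x − proj_C x) if x ∉ C, and equals 0 if x ∈ C. -/

import Mathlib

open Metric Asymptotics Filter InnerProductSpace

/-- Squared norm is little-o of the identity near a point. -/
lemma sq_isLittleO {H : Type*} [NormedAddCommGroup H] (x : H) :
    (fun y : H => ‖y - x‖ ^ 2) =o[nhds x] (fun y => y - x) := by
  rw [Asymptotics.isLittleO_iff]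
  intro c hc
  filter_upwards [Metric.ball_mem_nhds x hc] with y hy
  have h1 : ‖y - x‖ < c := by rwa [Metric.mem_ball, dist_eq_norm] at hy
  have h2 : ‖y - x‖ ^ 2 ≤ c * ‖y - x‖ := by
    rw [sq]
    exact mul_le_mul h1.le le_rfl (norm_nonneg _) hc.le
  simpa [abs_of_nonneg (sq_nonneg (‖y - x‖))] using h2

/-- With `C` nonempty closed convex, `φ : ℝ → ℝ` even convex
differentiable with `β`-Lipschitzian derivative, and `h = φ ∘ d_C`, the gradient of `h`
at `x` is `(φ'(d_C x)/d_C x) • (x − proj_C x)` when `x ∉ C` and `0` when `x ∈ C`. -/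
theorem stmt_3 {H : Type*} [NormedAddCommGroup H] [InnerProductSpace ℝ H] [CompleteSpace H]
    (C : Set H) (hCne : C.Nonempty) (hCclosed : IsClosed C) (hCconv : Convex ℝ C)
    (β : ℝ) (hβ : 0 < β)
    (φ : ℝ → ℝ) (heven : ∀ t, φ (-t) = φ t) (hconv : ConvexOn ℝ Set.univ φ)
    (φ' : ℝ → ℝ) (hderiv : ∀ t, HasDerivAt φ (φ' t) t)
    (hlip : LipschitzWith (Real.toNNReal β) φ')
    (h : H → ℝ) (hdef : ∀ x, h x = φ (Metric.infDist x C))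
    (projC : H → H)
    (hproj : ∀ x, projC x ∈ C ∧ ∀ y ∈ C, dist x (projC x) ≤ dist x y) :
    ∀ x : H,
      (x ∉ C → HasGradientAt h
        ((φ' (Metric.infDist x C) / Metric.infDist x C) • (x - projC x)) x) ∧
      (x ∈ C → HasGradientAt h 0 x) := by
  have hfun : h = fun y => φ (Metric.infDist y C) := funext hdef
  have hβ' : (Real.toNNReal β : ℝ) = β := Real.coe_toNNReal β hβ.le
  -- φ' 0 = 0
  have hφ'0 : φ' 0 = 0 := by
    have h1 : HasDerivAt (fun t : ℝ => φ (-t)) (φ' (-0) * (-1)) 0 :=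
      (hderiv (-(0:ℝ))).comp 0 (hasDerivAt_neg 0)
    have h2 : (fun t : ℝ => φ (-t)) = φ := funext heven
    rw [h2] at h1
    have := h1.unique (hderiv 0)
    simp only [neg_zero] at this
    linarith
  -- quadratic bound for φ near 0
  have hφbnd : ∀ t : ℝ, |φ t - φ 0| ≤ β * t ^ 2 := by
    intro t
    have hmem0 : (0:ℝ) ∈ Set.Icc (-|t|) |t| := by
      constructor <;> simp [abs_nonneg]
    have hmemt : t ∈ Set.Icc (-|t|) |t| := by
      constructor
      · linarith [neg_abs_le t]
      · exact le_abs_self t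
    have key := Convex.norm_image_sub_le_of_norm_hasDerivWithin_le
      (f := φ) (f' := φ') (s := Set.Icc (-|t|) |t|)
      (fun s _ => (hderiv s).hasDerivWithinAt)
      (fun s hs => by
        have hl := hlip.dist_le_mul s 0
        rw [hβ'] at hl
        simp only [Real.norm_eq_abs]
        calc |φ' s| = dist (φ' s) (φ' 0) := by rw [hφ'0, Real.dist_eq, sub_zero]
          _ ≤ β * dist s 0 := hl
          _ = β * |s| := by rw [Real.dist_eq, sub_zero]
          _ ≤ β * |t| := by
              have habs : |s| ≤ |t| := abs_le.2 ⟨hs.1, hs.2⟩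
              exact mul_le_mul_of_nonneg_left habs hβ.le)
      (convex_Icc _ _) hmem0 hmemt
    calc |φ t - φ 0| ≤ β * |t| * ‖t - 0‖ := key
      _ = β * t ^ 2 := by rw [sub_zero, Real.norm_eq_abs, mul_assoc, ← abs_mul, ← sq,
            abs_of_nonneg (sq_nonneg t)]
  intro x
  constructor
  · -- x ∉ C
    intro hx
    haveI : Nonempty ↑C := hCne.to_subtype
    set d := Metric.infDist x C with hd
    have hd0 : 0 < d := (hCclosed.notMem_iff_infDist_pos hCne).1 hx
    set P := projC x with hP
    have hPmem := (hproj x).1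
    have hdP : dist x P = d := by
      refine le_antisymm ?_ (Metric.infDist_le_dist_of_mem hPmem)
      rw [hd, Metric.infDist_eq_iInf]
      exact le_ciInf fun w => (hproj x).2 w w.2
    have hnorm : ‖x - P‖ = d := by rw [← dist_eq_norm]; exact hdP
    -- variational inequality
    have hvar : ∀ c ∈ C, inner ℝ (x - P) (c - P) ≤ (0:ℝ) := by
      refine (norm_eq_iInf_iff_real_inner_le_zero hCconv hPmem).1 ?_
      rw [hnorm, hd, Metric.infDist_eq_iInf]
      congr 1
      funext w
      rw [dist_eq_norm]
    set u : H := d⁻¹ • (x - P) with hu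
    have hnu : ‖u‖ = 1 := by
      rw [hu, norm_smul, hnorm, norm_inv, Real.norm_eq_abs, abs_of_pos hd0,
        inv_mul_cancel₀ hd0.ne']
    have huxP : inner ℝ u (x - P) = (d:ℝ) := by
      rw [hu, real_inner_smul_left, real_inner_self_eq_norm_sq, hnorm]
      field_simp
    -- lower bound : d + ⟪u, y - x⟫ ≤ infDist y C
    have hlow : ∀ y : H, d + inner ℝ u (y - x) ≤ Metric.infDist y C := by
      intro y
      rw [Metric.infDist_eq_iInf]
      refine le_ciInf fun c => ?_
      have h1 : inner ℝ u (y - (c:H)) ≤ ‖y - (c:H)‖ := by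
        calc inner ℝ u (y - (c:H)) ≤ ‖u‖ * ‖y - (c:H)‖ := real_inner_le_norm u _
          _ = ‖y - (c:H)‖ := by rw [hnu, one_mul]
      have h2 : (0:ℝ) ≤ inner ℝ u (P - (c:H)) := by
        have hv := hvar c c.2
        have h3 : inner ℝ u (P - (c:H)) = -(d⁻¹ * inner ℝ (x - P) ((c:H) - P)) := by
          rw [hu, real_inner_smul_left]
          have he : (P - (c:H)) = -((c:H) - P) := by abel
          rw [he, inner_neg_right]
          ring
        rw [h3]
        have : d⁻¹ * inner ℝ (x - P) ((c:H) - P) ≤ 0 :=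
          mul_nonpos_of_nonneg_of_nonpos (inv_nonneg.2 hd0.le) hv
        linarith
      have h4 : (inner ℝ u (y - (c:H)) : ℝ)
          = (inner ℝ u (y - x) : ℝ) + (inner ℝ u (x - P) : ℝ) + (inner ℝ u (P - (c:H)) : ℝ) := by
        rw [← inner_add_right, ← inner_add_right]
        congr 1
        abel
      have h5 : d + inner ℝ u (y - x) ≤ inner ℝ u (y - (c:H)) := by
        rw [h4, huxP]; linarith
      calc d + inner ℝ u (y - x) ≤ ‖y - (c:H)‖ := le_trans h5 h1
        _ = dist y (c:H) := (dist_eq_norm y _).symm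
    -- upper bound
    have hupp : ∀ y : H,
        Metric.infDist y C ≤ d + inner ℝ u (y - x) + ‖y - x‖ ^ 2 / (2 * d) := by
      intro y
      set t : ℝ := inner ℝ u (y - x) with ht
      set s : ℝ := ‖y - x‖ with hs
      have hts : |t| ≤ s := by
        calc |t| ≤ ‖u‖ * ‖y - x‖ := abs_real_inner_le_norm u (y - x)
          _ = s := by rw [hnu, one_mul]
      have hip : inner ℝ (y - x) (x - P) = d * t := by
        rw [ht, hu, real_inner_smul_left, real_inner_comm]
        field_simp
      have hyP : ‖y - P‖ ^ 2 = s ^ 2 + 2 * d * t + d ^ 2 := by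
        have hsplit : y - P = (y - x) + (x - P) := by abel
        rw [hsplit, norm_add_sq_real, hip, hnorm, ← hs]
        ring
      have hRHSpos : 0 ≤ d + t + s ^ 2 / (2 * d) := by
        have h1 : -s ≤ t := neg_le_of_abs_le hts
        have heq : d - s + s ^ 2 / (2 * d) = ((s - d) ^ 2 + d ^ 2) / (2 * d) := by
          field_simp
          ring
        have hpos : 0 ≤ ((s - d) ^ 2 + d ^ 2) / (2 * d) := by positivity
        linarith [heq ▸ hpos]
      have hkey : ‖y - P‖ ≤ d + t + s ^ 2 / (2 * d) := by
        have hsq : ‖y - P‖ ^ 2 ≤ (d + t + s ^ 2 / (2 * d)) ^ 2 := by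
          rw [hyP]
          have expand : (d + t + s ^ 2 / (2 * d)) ^ 2
              = s ^ 2 + 2 * d * t + d ^ 2 + (t + s ^ 2 / (2 * d)) ^ 2 := by
            field_simp
            ring
          nlinarith [sq_nonneg (t + s ^ 2 / (2 * d))]
        nlinarith [norm_nonneg (y - P)]
      calc Metric.infDist y C ≤ dist y P := Metric.infDist_le_dist_of_mem hPmem
        _ = ‖y - P‖ := dist_eq_norm y P
        _ ≤ d + t + s ^ 2 / (2 * d) := hkey
    -- gradient of infDist at x is u
    have hfd : HasFDerivAt (fun y => Metric.infDist y C) (toDual ℝ H u) x := by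
      have hbig : (fun y => Metric.infDist y C - Metric.infDist x C
          - (toDual ℝ H u) (y - x)) =O[nhds x] (fun y => ‖y - x‖ ^ 2) := by
        refine Asymptotics.IsBigO.of_bound (2 * d)⁻¹ ?_
        filter_upwards with y
        have h1 := hlow y
        have h2 := hupp y
        rw [toDual_apply_apply]
        simp only [Real.norm_eq_abs, norm_pow, norm_norm, abs_norm, ← hd]
        rw [abs_le]
        constructor
        · have : 0 ≤ (2*d)⁻¹ * ‖y - x‖ ^ 2 := by positivity
          linarith
        · have heq : (2*d)⁻¹ * ‖y - x‖ ^ 2 = ‖y - x‖ ^ 2 / (2 * d) := by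
            rw [div_eq_mul_inv, mul_comm]
          linarith [heq ▸ h2]
      exact .of_isLittleO (hbig.trans_isLittleO (sq_isLittleO x))
    -- compose with φ
    have hcomp : HasFDerivAt (fun y => φ (Metric.infDist y C))
        (φ' d • toDual ℝ H u) x :=
      (hderiv d).comp_hasFDerivAt x hfd
    have hsm : toDual ℝ H ((φ' d / d) • (x - P)) = φ' d • toDual ℝ H u := by
      ext y
      simp only [toDual_apply_apply, ContinuousLinearMap.coe_smul', Pi.smul_apply, smul_eq_mul,
        real_inner_smul_left, hu]
      field_simp
    rw [hfun]
    rw [hasGradientAt_iff_hasFDerivAt, hsm]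
    exact hcomp
  · -- x ∈ C
    intro hx
    have hdx : Metric.infDist x C = 0 := Metric.infDist_zero_of_mem hx
    rw [hasGradientAt_iff_hasFDerivAt]
    have h0 : (toDual ℝ H) (0 : H) = 0 := map_zero _
    rw [h0]
    have hbig : (fun y => h y - h x - (0 : H →L[ℝ] ℝ) (y - x))
        =O[nhds x] (fun y => ‖y - x‖ ^ 2) := by
      refine Asymptotics.IsBigO.of_bound β ?_
      filter_upwards with y
      simp only [ContinuousLinearMap.zero_apply, sub_zero, hdef, hdx, Real.norm_eq_abs,
        norm_pow, norm_norm, abs_norm]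
      have h1 : |φ (Metric.infDist y C) - φ 0| ≤ β * (Metric.infDist y C) ^ 2 :=
        hφbnd _
      have h2 : Metric.infDist y C ≤ ‖y - x‖ := by
        calc Metric.infDist y C ≤ dist y x := Metric.infDist_le_dist_of_mem hx
          _ = ‖y - x‖ := dist_eq_norm y x
      have h3 : (Metric.infDist y C) ^ 2 ≤ ‖y - x‖ ^ 2 := by
        apply sq_le_sq'
        · linarith [Metric.infDist_nonneg (s := C) (x := y), norm_nonneg (y - x)]
        · exact h2
      calc |φ (Metric.infDist y C) - φ 0| ≤ β * (Metric.infDist y C) ^ 2 := h1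
        _ ≤ β * ‖y - x‖ ^ 2 := mul_le_mul_of_nonneg_left h3 hβ.le
    exact .of_isLittleO (hbig.trans_isLittleO (sq_isLittleO x))
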